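/- arXiv:1702.03866 — 3 statements merged into one kernel-verified Lean document; each statement's English description precedes it below -/
import Mathlib

section
/- Let M be a real n_B × n_A matrix with local bound C = max over A ∈ {−1,1}^{n_A} of ∑_i |∑_x M_{ix} A_x|. Suppose for each of N sources k there are measurable functions λ_k ↦ A^k_x(λ_k) ∈ [−1,1] and λ⃗ ↦ B_i(λ⃗) ∈ [−1,1], and probability measures q_k, and define I_i = ∫ (∏_{k=1}^N ∑_x M_{ix} A^k_x(λ_k)) B_i(λ⃗) ∏_k dq_k(λ_k). Then ∑_{i=1}^{n_B} |I_i|^{1/N} ≤ C. -/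
open MeasureTheory

/-- Convexity: the quantity is maximized at vertices of the cube. -/
lemma vertex_bound {nA nB : ℕ} (M : Fin nB → Fin nA → ℝ) (C : ℝ)
    (hC : ∀ A : Fin nA → ℝ, (∀ x, A x = 1 ∨ A x = -1) →
      ∑ i : Fin nB, |∑ x : Fin nA, M i x * A x| ≤ C)
    (a : Fin nA → ℝ) (ha : ∀ x, |a x| ≤ 1) :
    ∑ i : Fin nB, |∑ x : Fin nA, M i x * a x| ≤ C := by
  have key : ∀ s : Finset (Fin nA), ∀ a : Fin nA → ℝ, (∀ x, |a x| ≤ 1) →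
      (∀ x ∉ s, a x = 1 ∨ a x = -1) →
      ∑ i : Fin nB, |∑ x : Fin nA, M i x * a x| ≤ C := by
    intro s
    induction s using Finset.induction with
    | empty => intro a ha hs; exact hC a (fun x => hs x (Finset.notMem_empty x))
    | @insert x0 s hx0 ih =>
      intro a ha hs
      set t : ℝ := (a x0 + 1) / 2 with ht
      have habs := abs_le.1 (ha x0)
      have ht0 : 0 ≤ t := by simp only [ht]; linarith [habs.1]
      have ht1 : t ≤ 1 := by simp only [ht]; linarith [habs.2]
      set a1 := Function.update a x0 1 with ha1
      set a2 := Function.update a x0 (-1) with ha2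
      have ha1b : ∀ x, |a1 x| ≤ 1 := by
        intro x
        by_cases h : x = x0
        · simp [ha1, h]
        · simpa [ha1, Function.update_of_ne h] using ha x
      have ha2b : ∀ x, |a2 x| ≤ 1 := by
        intro x
        by_cases h : x = x0
        · simp [ha2, h]
        · simpa [ha2, Function.update_of_ne h] using ha x
      have ha1s : ∀ x ∉ s, a1 x = 1 ∨ a1 x = -1 := by
        intro x hx
        by_cases h : x = x0
        · left; simp [ha1, h]
        · rw [ha1, Function.update_of_ne h]
          exact hs x (by simp [Finset.mem_insert, h, hx])
      have ha2s : ∀ x ∉ s, a2 x = 1 ∨ a2 x = -1 := by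
        intro x hx
        by_cases h : x = x0
        · right; simp [ha2, h]
        · rw [ha2, Function.update_of_ne h]
          exact hs x (by simp [Finset.mem_insert, h, hx])
      have hdecomp : ∀ x, a x = t * a1 x + (1 - t) * a2 x := by
        intro x
        by_cases h : x = x0
        · subst h; simp [ha1, ha2, ht]; ring
        · rw [ha1, ha2, Function.update_of_ne h, Function.update_of_ne h]; ring
      have hsum : ∀ i, (∑ x : Fin nA, M i x * a x) =
          t * (∑ x : Fin nA, M i x * a1 x) + (1 - t) * (∑ x : Fin nA, M i x * a2 x) := by
        intro i
        rw [Finset.mul_sum, Finset.mul_sum, ← Finset.sum_add_distrib]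
        refine Finset.sum_congr rfl fun x _ => ?_
        rw [hdecomp x]; ring
      calc ∑ i : Fin nB, |∑ x : Fin nA, M i x * a x|
          ≤ ∑ i : Fin nB, (t * |∑ x : Fin nA, M i x * a1 x|
              + (1 - t) * |∑ x : Fin nA, M i x * a2 x|) := by
            refine Finset.sum_le_sum fun i _ => ?_
            rw [hsum i]
            calc |t * (∑ x : Fin nA, M i x * a1 x) + (1 - t) * (∑ x : Fin nA, M i x * a2 x)|
                ≤ |t * (∑ x : Fin nA, M i x * a1 x)| + |(1 - t) * (∑ x : Fin nA, M i x * a2 x)| :=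
                  abs_add_le _ _
              _ = t * |∑ x : Fin nA, M i x * a1 x| + (1 - t) * |∑ x : Fin nA, M i x * a2 x| := by
                  rw [abs_mul, abs_mul, abs_of_nonneg ht0, abs_of_nonneg (show (0:ℝ) ≤ 1 - t by linarith)]
        _ = t * (∑ i : Fin nB, |∑ x : Fin nA, M i x * a1 x|)
              + (1 - t) * (∑ i : Fin nB, |∑ x : Fin nA, M i x * a2 x|) := by
            rw [Finset.sum_add_distrib, Finset.mul_sum, Finset.mul_sum]
        _ ≤ t * C + (1 - t) * C := by
            have h1 := ih a1 ha1b ha1s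
            have h2 := ih a2 ha2b ha2s
            have := mul_le_mul_of_nonneg_left h1 ht0
            have := mul_le_mul_of_nonneg_left h2 (by linarith : (0:ℝ) ≤ 1 - t)
            nlinarith
        _ = C := by ring
  exact key Finset.univ a ha (fun x hx => absurd (Finset.mem_univ x) hx)

/-- Generalized Hölder / Mahler inequality via weighted AM-GM. -/
lemma gen_holder {nB N : ℕ} (hN : 1 ≤ N) (t : Fin nB → Fin N → ℝ)
    (ht : ∀ i k, 0 ≤ t i k) :
    ∑ i : Fin nB, ∏ k : Fin N, (t i k) ^ (1 / (N : ℝ)) ≤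
      ∏ k : Fin N, (∑ i : Fin nB, t i k) ^ (1 / (N : ℝ)) := by
  have hNpos : (0:ℝ) < N := by exact_mod_cast hN
  have hw : (0:ℝ) < 1 / N := by positivity
  by_cases hzero : ∃ k0, (∑ i : Fin nB, t i k0) = 0
  · obtain ⟨k0, hk0⟩ := hzero
    have ht0 : ∀ i, t i k0 = 0 := by
      intro i
      have := (Finset.sum_eq_zero_iff_of_nonneg (fun j _ => ht j k0)).1 hk0
      exact this i (Finset.mem_univ i)
    have hlhs : ∑ i : Fin nB, ∏ k : Fin N, (t i k) ^ (1 / (N : ℝ)) = 0 := by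
      refine Finset.sum_eq_zero fun i _ => ?_
      refine Finset.prod_eq_zero (Finset.mem_univ k0) ?_
      rw [ht0 i, Real.zero_rpow (ne_of_gt hw)]
    rw [hlhs]
    exact Finset.prod_nonneg fun k _ => Real.rpow_nonneg
      (Finset.sum_nonneg fun i _ => ht i k) _
  · push_neg at hzero
    set S : Fin N → ℝ := fun k => ∑ i : Fin nB, t i k with hS
    have hSpos : ∀ k, 0 < S k := fun k =>
      lt_of_le_of_ne (Finset.sum_nonneg fun i _ => ht i k) (Ne.symm (hzero k))
    have key : ∀ i, ∏ k : Fin N, (t i k) ^ (1 / (N : ℝ)) ≤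
        (∑ k : Fin N, (1 / (N : ℝ)) * (t i k / S k)) * ∏ k : Fin N, (S k) ^ (1 / (N : ℝ)) := by
      intro i
      have hgm := Real.geom_mean_le_arith_mean_weighted Finset.univ
        (fun _ : Fin N => 1 / (N : ℝ)) (fun k => t i k / S k)
        (fun k _ => le_of_lt hw)
        (by simp [Finset.sum_const, Finset.card_univ]
            field_simp)
        (fun k _ => div_nonneg (ht i k) (le_of_lt (hSpos k)))
      have heq : ∏ k : Fin N, (t i k / S k) ^ (1 / (N : ℝ)) =
          (∏ k : Fin N, (t i k) ^ (1 / (N : ℝ))) / ∏ k : Fin N, (S k) ^ (1 / (N : ℝ)) := by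
        rw [← Finset.prod_div_distrib]
        refine Finset.prod_congr rfl fun k _ => ?_
        rw [Real.div_rpow (ht i k) (le_of_lt (hSpos k))]
      rw [heq] at hgm
      have hprodpos : 0 < ∏ k : Fin N, (S k) ^ (1 / (N : ℝ)) :=
        Finset.prod_pos fun k _ => Real.rpow_pos_of_pos (hSpos k) _
      calc ∏ k : Fin N, (t i k) ^ (1 / (N : ℝ))
          = ((∏ k : Fin N, (t i k) ^ (1 / (N : ℝ))) / ∏ k : Fin N, (S k) ^ (1 / (N : ℝ)))
            * ∏ k : Fin N, (S k) ^ (1 / (N : ℝ)) := by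
            field_simp
        _ ≤ (∑ k : Fin N, (1 / (N : ℝ)) * (t i k / S k)) * ∏ k : Fin N, (S k) ^ (1 / (N : ℝ)) :=
            mul_le_mul_of_nonneg_right hgm (le_of_lt hprodpos)
    calc ∑ i : Fin nB, ∏ k : Fin N, (t i k) ^ (1 / (N : ℝ))
        ≤ ∑ i : Fin nB, (∑ k : Fin N, (1 / (N : ℝ)) * (t i k / S k))
            * ∏ k : Fin N, (S k) ^ (1 / (N : ℝ)) :=
          Finset.sum_le_sum fun i _ => key i
      _ = (∑ i : Fin nB, ∑ k : Fin N, (1 / (N : ℝ)) * (t i k / S k))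
            * ∏ k : Fin N, (S k) ^ (1 / (N : ℝ)) := by
          rw [Finset.sum_mul]
      _ = 1 * ∏ k : Fin N, (S k) ^ (1 / (N : ℝ)) := by
          congr 1
          rw [Finset.sum_comm]
          have : ∀ k : Fin N, ∑ i : Fin nB, (1 / (N : ℝ)) * (t i k / S k) = 1 / (N : ℝ) := by
            intro k
            rw [← Finset.mul_sum, ← Finset.sum_div]
            rw [div_self (ne_of_gt (hSpos k)), mul_one]
          simp only [this]
          rw [Finset.sum_const, Finset.card_univ, Fintype.card_fin, nsmul_eq_mul]
          field_simp
      _ = ∏ k : Fin N, (S k) ^ (1 / (N : ℝ)) := one_mul _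

theorem stmt_3 (N nA nB : ℕ) (hN : 1 ≤ N)
    (M : Fin nB → Fin nA → ℝ) (C : ℝ)
    (hC : IsGreatest {S : ℝ | ∃ A : Fin nA → ℝ,
        (∀ x, A x = 1 ∨ A x = -1) ∧
        S = ∑ i : Fin nB, |∑ x : Fin nA, M i x * A x|} C)
    (Λ : Fin N → Type) [∀ k, MeasurableSpace (Λ k)]
    (q : ∀ k, Measure (Λ k)) [∀ k, IsProbabilityMeasure (q k)]
    (A : ∀ k : Fin N, Fin nA → Λ k → ℝ)
    (B : Fin nB → (∀ k, Λ k) → ℝ)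
    (hAm : ∀ k x, Measurable (A k x))
    (hBm : ∀ i, Measurable (B i))
    (hAb : ∀ k x lam, |A k x lam| ≤ 1)
    (hBb : ∀ i lam, |B i lam| ≤ 1)
    (I : Fin nB → ℝ)
    (hI : ∀ i, I i = ∫ lam, (∏ k : Fin N, ∑ x : Fin nA, M i x * A k x (lam k)) *
        B i lam ∂(Measure.pi q)) :
    ∑ i : Fin nB, |I i| ^ (1 / (N : ℝ)) ≤ C := by
  letI : ∀ k, MeasureSpace (Λ k) := fun k => ⟨q k⟩
  haveI : ∀ k, IsProbabilityMeasure (volume : Measure (Λ k)) := fun k =>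
    inferInstanceAs (IsProbabilityMeasure (q k))
  have hC0 : 0 ≤ C := by
    obtain ⟨A0, _, hA0⟩ := hC.1
    rw [hA0]
    exact Finset.sum_nonneg fun i _ => abs_nonneg _
  have hvert := fun a ha => vertex_bound M C (fun A hA => hC.2 ⟨A, hA, rfl⟩) a ha
  -- the single-source correlators
  set f : Fin nB → ∀ k, Λ k → ℝ := fun i k l => ∑ x : Fin nA, M i x * A k x l with hf
  have hfm : ∀ i k, Measurable (f i k) := fun i k =>
    Finset.measurable_sum _ fun x _ => (hAm k x).const_mul _
  have hfb : ∀ i k l, |f i k l| ≤ ∑ x : Fin nA, |M i x| := by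
    intro i k l
    calc |f i k l| ≤ ∑ x : Fin nA, |M i x * A k x l| := Finset.abs_sum_le_sum_abs _ _
      _ ≤ ∑ x : Fin nA, |M i x| := by
          refine Finset.sum_le_sum fun x _ => ?_
          rw [abs_mul]
          exact mul_le_of_le_one_right (abs_nonneg _) (hAb k x l)
  have hfint : ∀ i k, Integrable (fun l => |f i k l|) (q k) := by
    intro i k
    refine ⟨(hfm i k).abs.aestronglyMeasurable, ?_⟩
    refine HasFiniteIntegral.of_bounded (C := ∑ x : Fin nA, |M i x|) (ae_of_all _ fun l => ?_)
    simpa [abs_abs] using hfb i k l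
  set J : Fin nB → Fin N → ℝ := fun i k => ∫ l, |f i k l| ∂(q k) with hJ
  have hJ0 : ∀ i k, 0 ≤ J i k := fun i k =>
    integral_nonneg fun l => abs_nonneg _
  -- Fubini: |I i| ≤ ∏ k, J i k
  have hIle : ∀ i, |I i| ≤ ∏ k : Fin N, J i k := by
    intro i
    rw [hI i]
    have habs : |∫ lam, (∏ k : Fin N, f i k (lam k)) * B i lam ∂(Measure.pi q)| ≤
        ∫ lam, |(∏ k : Fin N, f i k (lam k)) * B i lam| ∂(Measure.pi q) := by
      simpa only [Real.norm_eq_abs] using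
        norm_integral_le_integral_norm (μ := Measure.pi q)
          (fun lam : ∀ k, Λ k => (∏ k : Fin N, f i k (lam k)) * B i lam)
    have hprodint : Integrable (fun lam : ∀ k, Λ k => ∏ k : Fin N, |f i k (lam k)|)
        (Measure.pi q) := by
      have := Integrable.fintype_prod_dep (𝕜 := ℝ)
        (f := fun k (l : Λ k) => |f i k l|) (fun k => hfint i k)
      exact this
    have hmono : ∫ lam, |(∏ k : Fin N, f i k (lam k)) * B i lam| ∂(Measure.pi q) ≤
        ∫ lam, ∏ k : Fin N, |f i k (lam k)| ∂(Measure.pi q) := by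
      refine integral_mono_of_nonneg (ae_of_all _ fun lam => abs_nonneg _) hprodint
        (ae_of_all _ fun lam => ?_)
      show |(∏ k : Fin N, f i k (lam k)) * B i lam| ≤ ∏ k : Fin N, |f i k (lam k)|
      rw [abs_mul, Finset.abs_prod]
      exact mul_le_of_le_one_right (Finset.prod_nonneg fun k _ => abs_nonneg _) (hBb i lam)
    have hfub : ∫ lam, ∏ k : Fin N, |f i k (lam k)| ∂(Measure.pi q) = ∏ k : Fin N, J i k := by
      exact integral_fintype_prod_eq_prod (𝕜 := ℝ) (ι := Fin N)
        (fun k (l : Λ k) => |f i k l|)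
    exact le_trans habs (le_trans hmono (le_of_eq hfub))
  -- per-source bound: ∑ i, J i k ≤ C
  have hsumJ : ∀ k, ∑ i : Fin nB, J i k ≤ C := by
    intro k
    have : ∑ i : Fin nB, J i k = ∫ l, ∑ i : Fin nB, |f i k l| ∂(q k) :=
      (integral_finset_sum _ fun i _ => hfint i k).symm
    rw [this]
    have hCint : Integrable (fun _ : Λ k => C) (q k) := integrable_const C
    have := integral_mono_of_nonneg
      (ae_of_all _ fun l => Finset.sum_nonneg fun i _ => abs_nonneg (f i k l)) hCint
      (ae_of_all _ fun l => hvert (fun x => A k x l) (fun x => hAb k x l))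
    simpa using this
  -- combine
  have step1 : ∑ i : Fin nB, |I i| ^ (1 / (N : ℝ)) ≤
      ∑ i : Fin nB, ∏ k : Fin N, (J i k) ^ (1 / (N : ℝ)) := by
    refine Finset.sum_le_sum fun i _ => ?_
    rw [Real.finset_prod_rpow _ _ (fun k _ => hJ0 i k)]
    exact Real.rpow_le_rpow (abs_nonneg _) (hIle i) (by positivity)
  have step2 := gen_holder hN J hJ0
  have step3 : ∏ k : Fin N, (∑ i : Fin nB, J i k) ^ (1 / (N : ℝ)) ≤ C := by
    have hle : ∏ k : Fin N, (∑ i : Fin nB, J i k) ^ (1 / (N : ℝ)) ≤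
        ∏ k : Fin N, C ^ (1 / (N : ℝ)) := by
      refine Finset.prod_le_prod (fun k _ => Real.rpow_nonneg
        (Finset.sum_nonneg fun i _ => hJ0 i k) _) (fun k _ => ?_)
      exact Real.rpow_le_rpow (Finset.sum_nonneg fun i _ => hJ0 i k) (hsumJ k) (by positivity)
    refine le_trans hle (le_of_eq ?_)
    rw [Finset.prod_const, Finset.card_univ, Fintype.card_fin,
      ← Real.rpow_natCast (C ^ (1 / (N : ℝ))) N, ← Real.rpow_mul hC0]
    rw [one_div, inv_mul_cancel₀ (Nat.cast_ne_zero.2 (by omega) : (N:ℝ) ≠ 0),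
      Real.rpow_one]
  exact le_trans step1 (le_trans step2 step3)
end

section
/- Generalized star inequality: for each k = 1,...,N let M^(k) be a real n_B × n_A^(k) matrix with local bound C_k = max over A ∈ {−1,1}^{n_A^(k)} of ∑_i |∑_x M^(k)_{ix} A_x|. Given correlator functions A^k_x(λ_k) ∈ [−1,1], B_i(λ⃗) ∈ [−1,1] and product probability measure, define I_i = ∫ (∏_{k=1}^N ∑_x M^(k)_{ix} A^k_x(λ_k)) B_i(λ⃗) dq. Then ∑_{i=1}^{n_B} |I_i|^{1/N} ≤ (C_1 ⋯ C_N)^{1/N}. -/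
open MeasureTheory

-- Auxiliary: convexity bound on the cube; the maximum of a sum of absolute
-- values of linear functions over the cube is attained at the vertices.
lemma cube_bound {n nB : ℕ} (M : Fin nB → Fin n → ℝ) (C : ℝ)
    (hub : ∀ A : Fin n → ℝ, (∀ x, A x = 1 ∨ A x = -1) →
      ∑ i : Fin nB, |∑ x : Fin n, M i x * A x| ≤ C)
    (A : Fin n → ℝ) (hA : ∀ x, |A x| ≤ 1) :
    ∑ i : Fin nB, |∑ x : Fin n, M i x * A x| ≤ C := by
  suffices h : ∀ s : Finset (Fin n), ∀ A : Fin n → ℝ, (∀ x, |A x| ≤ 1) →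
      (∀ x, x ∉ s → A x = 1 ∨ A x = -1) →
      ∑ i : Fin nB, |∑ x : Fin n, M i x * A x| ≤ C by
    exact h Finset.univ A hA (fun x hx => absurd (Finset.mem_univ x) hx)
  intro s
  induction s using Finset.induction_on with
  | empty =>
    intro A hA h
    exact hub A (fun x => h x (Finset.notMem_empty x))
  | @insert x₀ s hx₀ ih =>
    intro A hA hout
    set t := A x₀ with htdef
    have ht : |t| ≤ 1 := hA x₀
    have ht1 : -1 ≤ t := neg_le_of_abs_le ht
    have ht2 : t ≤ 1 := le_of_abs_le ht
    set Ap := Function.update A x₀ 1 with hApdef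
    set Am := Function.update A x₀ (-1) with hAmdef
    have hsum : ∀ (i : Fin nB) (B : Fin n → ℝ),
        ∑ x : Fin n, M i x * B x
          = (∑ x ∈ Finset.univ.erase x₀, M i x * B x) + M i x₀ * B x₀ := by
      intro i B
      rw [← Finset.add_sum_erase _ _ (Finset.mem_univ x₀)]
      ring
    have key : ∀ i : Fin nB, |∑ x : Fin n, M i x * A x| ≤
        (1+t)/2 * |∑ x : Fin n, M i x * Ap x| + (1-t)/2 * |∑ x : Fin n, M i x * Am x| := by
      intro i
      have hErase : ∀ c : ℝ, ∑ x ∈ Finset.univ.erase x₀, M i x * Function.update A x₀ c x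
          = ∑ x ∈ Finset.univ.erase x₀, M i x * A x := by
        intro c
        refine Finset.sum_congr rfl fun x hx => ?_
        rw [Function.update_of_ne (Finset.ne_of_mem_erase hx)]
      set c := ∑ x ∈ Finset.univ.erase x₀, M i x * A x with hcdef
      have hA' : ∑ x : Fin n, M i x * A x = c + M i x₀ * t := hsum i A
      have hAp' : ∑ x : Fin n, M i x * Ap x = c + M i x₀ * 1 := by
        rw [hsum i Ap, hApdef, hErase 1, Function.update_self]
      have hAm' : ∑ x : Fin n, M i x * Am x = c + M i x₀ * (-1) := by
        rw [hsum i Am, hAmdef, hErase (-1), Function.update_self]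
      rw [hA', hAp', hAm']
      have hid : c + M i x₀ * t
          = (1+t)/2 * (c + M i x₀ * 1) + (1-t)/2 * (c + M i x₀ * (-1)) := by ring
      rw [hid]
      calc |(1+t)/2 * (c + M i x₀ * 1) + (1-t)/2 * (c + M i x₀ * (-1))|
          ≤ |(1+t)/2 * (c + M i x₀ * 1)| + |(1-t)/2 * (c + M i x₀ * (-1))| := abs_add_le _ _
        _ = (1+t)/2 * |c + M i x₀ * 1| + (1-t)/2 * |c + M i x₀ * (-1)| := by
            rw [abs_mul, abs_mul, abs_of_nonneg (by linarith : (0:ℝ) ≤ (1+t)/2),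
              abs_of_nonneg (by linarith : (0:ℝ) ≤ (1-t)/2)]
    have hApb : ∀ x, |Ap x| ≤ 1 := by
      intro x
      by_cases hx : x = x₀
      · subst hx; rw [hApdef, Function.update_self]; norm_num
      · rw [hApdef, Function.update_of_ne hx]; exact hA x
    have hAmb : ∀ x, |Am x| ≤ 1 := by
      intro x
      by_cases hx : x = x₀
      · subst hx; rw [hAmdef, Function.update_self]; norm_num
      · rw [hAmdef, Function.update_of_ne hx]; exact hA x
    have hApout : ∀ x, x ∉ s → Ap x = 1 ∨ Ap x = -1 := by
      intro x hx
      by_cases hx' : x = x₀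
      · subst hx'; left; rw [hApdef, Function.update_self]
      · rw [hApdef, Function.update_of_ne hx']
        exact hout x (by simp [hx, hx'])
    have hAmout : ∀ x, x ∉ s → Am x = 1 ∨ Am x = -1 := by
      intro x hx
      by_cases hx' : x = x₀
      · subst hx'; right; rw [hAmdef, Function.update_self]
      · rw [hAmdef, Function.update_of_ne hx']
        exact hout x (by simp [hx, hx'])
    have hp := ih Ap hApb hApout
    have hm := ih Am hAmb hAmout
    calc ∑ i : Fin nB, |∑ x : Fin n, M i x * A x|
        ≤ ∑ i : Fin nB, ((1+t)/2 * |∑ x : Fin n, M i x * Ap x|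
            + (1-t)/2 * |∑ x : Fin n, M i x * Am x|) :=
          Finset.sum_le_sum fun i _ => key i
      _ = (1+t)/2 * (∑ i : Fin nB, |∑ x : Fin n, M i x * Ap x|)
            + (1-t)/2 * (∑ i : Fin nB, |∑ x : Fin n, M i x * Am x|) := by
          rw [Finset.sum_add_distrib, ← Finset.mul_sum, ← Finset.mul_sum]
      _ ≤ (1+t)/2 * C + (1-t)/2 * C := by
          refine add_le_add ?_ ?_
          · exact mul_le_mul_of_nonneg_left hp (by linarith)
          · exact mul_le_mul_of_nonneg_left hm (by linarith)
      _ = C := by ring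

-- Auxiliary: superadditivity of the geometric mean (a consequence of AM-GM).
lemma geom_superadd {N nB : ℕ} (hN : 1 ≤ N) (a : Fin nB → Fin N → ℝ)
    (ha : ∀ i k, 0 ≤ a i k) :
    ∑ i : Fin nB, ∏ k : Fin N, a i k ^ (1/(N:ℝ))
      ≤ ∏ k : Fin N, (∑ i : Fin nB, a i k) ^ (1/(N:ℝ)) := by
  have hNR : (0:ℝ) < (N:ℝ) := by exact_mod_cast hN
  set T : Fin N → ℝ := fun k => ∑ i : Fin nB, a i k with hT
  have hT0 : ∀ k, 0 ≤ T k := fun k => Finset.sum_nonneg fun i _ => ha i k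
  by_cases hzero : ∃ k, T k = 0
  · obtain ⟨k0, hk0⟩ := hzero
    have hz : ∀ i : Fin nB, a i k0 = 0 := fun i =>
      (Finset.sum_eq_zero_iff_of_nonneg (fun i _ => ha i k0)).1 hk0 i (Finset.mem_univ i)
    have hL : ∑ i : Fin nB, ∏ k : Fin N, a i k ^ (1/(N:ℝ)) = 0 :=
      Finset.sum_eq_zero fun i _ => Finset.prod_eq_zero (Finset.mem_univ k0)
        (by rw [hz i]; exact Real.zero_rpow (by positivity))
    rw [hL]
    exact Finset.prod_nonneg fun k _ => Real.rpow_nonneg (hT0 k) _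
  · push_neg at hzero
    have hTpos : ∀ k, 0 < T k := fun k => lt_of_le_of_ne (hT0 k) (Ne.symm (hzero k))
    have hwsum : ∑ _k : Fin N, (1/(N:ℝ)) = 1 := by
      rw [Finset.sum_const, Finset.card_univ, Fintype.card_fin, nsmul_eq_mul]
      field_simp
    have key : ∀ i : Fin nB, ∏ k : Fin N, a i k ^ (1/(N:ℝ)) ≤
        (∏ k : Fin N, T k ^ (1/(N:ℝ))) * ∑ k : Fin N, (1/(N:ℝ)) * (a i k / T k) := by
      intro i
      have h1 : ∏ k : Fin N, a i k ^ (1/(N:ℝ))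
          = (∏ k : Fin N, T k ^ (1/(N:ℝ))) * ∏ k : Fin N, (a i k / T k) ^ (1/(N:ℝ)) := by
        rw [← Finset.prod_mul_distrib]
        refine Finset.prod_congr rfl fun k _ => ?_
        rw [← Real.mul_rpow (hT0 k) (div_nonneg (ha i k) (hT0 k)), ← mul_div_assoc,
          mul_div_cancel_left₀ _ (hTpos k).ne']
      rw [h1]
      refine mul_le_mul_of_nonneg_left ?_
        (Finset.prod_nonneg fun k _ => Real.rpow_nonneg (hT0 k) _)
      exact Real.geom_mean_le_arith_mean_weighted Finset.univ _ _
        (fun k _ => by positivity) hwsum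
        (fun k _ => div_nonneg (ha i k) (hT0 k))
    calc ∑ i : Fin nB, ∏ k : Fin N, a i k ^ (1/(N:ℝ))
        ≤ ∑ i : Fin nB, (∏ k : Fin N, T k ^ (1/(N:ℝ)))
            * ∑ k : Fin N, (1/(N:ℝ)) * (a i k / T k) :=
          Finset.sum_le_sum fun i _ => key i
      _ = (∏ k : Fin N, T k ^ (1/(N:ℝ)))
            * ∑ i : Fin nB, ∑ k : Fin N, (1/(N:ℝ)) * (a i k / T k) := by
          rw [Finset.mul_sum]
      _ = ∏ k : Fin N, T k ^ (1/(N:ℝ)) := by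
        have : ∑ i : Fin nB, ∑ k : Fin N, (1/(N:ℝ)) * (a i k / T k) = 1 := by
          rw [Finset.sum_comm]
          have : ∀ k : Fin N, ∑ i : Fin nB, (1/(N:ℝ)) * (a i k / T k) = 1/(N:ℝ) := by
            intro k
            rw [← Finset.mul_sum, ← Finset.sum_div, div_self (hTpos k).ne', mul_one]
          rw [Finset.sum_congr rfl fun k _ => this k, hwsum]
        rw [this, mul_one]

-- Auxiliary: bounded measurable functions are integrable w.r.t. finite measures.
lemma integrable_of_bdd {α : Type*} [MeasurableSpace α] {μ : Measure α} [IsFiniteMeasure μ]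
    {f : α → ℝ} (hm : Measurable f) {c : ℝ} (hb : ∀ x, |f x| ≤ c) : Integrable f μ :=
  ⟨hm.aestronglyMeasurable, HasFiniteIntegral.of_bounded (C := c)
    (Filter.Eventually.of_forall fun x => by simpa [Real.norm_eq_abs] using hb x)⟩

theorem stmt_4 (N nB : ℕ) (hN : 1 ≤ N) (nA : Fin N → ℕ)
    (M : ∀ k : Fin N, Fin nB → Fin (nA k) → ℝ) (C : Fin N → ℝ)
    (hC : ∀ k, IsGreatest {S : ℝ | ∃ A : Fin (nA k) → ℝ,
        (∀ x, A x = 1 ∨ A x = -1) ∧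
        S = ∑ i : Fin nB, |∑ x : Fin (nA k), M k i x * A x|} (C k))
    (Λ : Fin N → Type) [∀ k, MeasurableSpace (Λ k)]
    (q : ∀ k, Measure (Λ k)) [∀ k, IsProbabilityMeasure (q k)]
    (A : ∀ k : Fin N, Fin (nA k) → Λ k → ℝ)
    (B : Fin nB → (∀ k, Λ k) → ℝ)
    (hAm : ∀ k x, Measurable (A k x))
    (hBm : ∀ i, Measurable (B i))
    (hAb : ∀ k x lam, |A k x lam| ≤ 1)
    (hBb : ∀ i lam, |B i lam| ≤ 1)
    (I : Fin nB → ℝ)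
    (hI : ∀ i, I i = ∫ lam,
        (∏ k : Fin N, ∑ x : Fin (nA k), M k i x * A k x (lam k)) *
        B i lam ∂(Measure.pi q)) :
    ∑ i : Fin nB, |I i| ^ (1 / (N : ℝ)) ≤ (∏ k : Fin N, C k) ^ (1 / (N : ℝ)) := by
  have hNR : (0:ℝ) < (N:ℝ) := by exact_mod_cast hN
  have hrpos : (0:ℝ) < 1/(N:ℝ) := by positivity
  set S : ∀ k : Fin N, Fin nB → Λ k → ℝ :=
    fun k i l => ∑ x : Fin (nA k), M k i x * A k x l with hSdef
  have hSm : ∀ k i, Measurable (S k i) := fun k i =>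
    Finset.measurable_sum _ fun x _ => (hAm k x).const_mul _
  have hSb : ∀ k i l, |S k i l| ≤ ∑ x : Fin (nA k), |M k i x| := by
    intro k i l
    calc |∑ x : Fin (nA k), M k i x * A k x l|
        ≤ ∑ x : Fin (nA k), |M k i x * A k x l| := Finset.abs_sum_le_sum_abs _ _
      _ ≤ ∑ x : Fin (nA k), |M k i x| := Finset.sum_le_sum fun x _ => by
          rw [abs_mul]
          exact mul_le_of_le_one_right (abs_nonneg _) (hAb k x l)
  set a : Fin nB → Fin N → ℝ := fun i k => ∫ l, |S k i l| ∂(q k) with hadef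
  have ha0 : ∀ i k, 0 ≤ a i k := fun i k => integral_nonneg fun l => abs_nonneg _
  have haInt : ∀ k i, Integrable (fun l => |S k i l|) (q k) := fun k i =>
    integrable_of_bdd (hSm k i).abs (fun l => by simpa [abs_abs] using hSb k i l)
  -- column sums are bounded by the classical bounds
  have hcol : ∀ k, ∑ i : Fin nB, a i k ≤ C k := by
    intro k
    have h0 : ∑ i : Fin nB, a i k = ∫ l, ∑ i : Fin nB, |S k i l| ∂(q k) :=
      (integral_finset_sum _ (fun i _ => haInt k i)).symm
    rw [h0]
    have h1 : ∀ l, ∑ i : Fin nB, |S k i l| ≤ C k := fun l =>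
      cube_bound (M k) (C k) (fun A' hA' => (hC k).2 ⟨A', hA', rfl⟩)
        (fun x => A k x l) (fun x => hAb k x l)
    calc ∫ l, ∑ i : Fin nB, |S k i l| ∂(q k) ≤ ∫ _, C k ∂(q k) :=
          integral_mono (integrable_finset_sum _ fun i _ => haInt k i)
            (integrable_const _) h1
      _ = C k := by simp
  have hC0 : ∀ k, 0 ≤ C k := by
    intro k
    obtain ⟨A', _, hEq⟩ := (hC k).1
    rw [hEq]
    positivity
  -- main per-correlator bound
  letI : ∀ k, MeasureSpace (Λ k) := fun k => ⟨q k⟩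
  haveI : ∀ k, SigmaFinite (volume : Measure (Λ k)) :=
    fun k => inferInstanceAs (SigmaFinite (q k))
  have hkey : ∀ i, |I i| ≤ ∏ k : Fin N, a i k := by
    intro i
    rw [hI i]
    have hgm : Measurable fun lam : ∀ k, Λ k => ∏ k : Fin N, |S k i (lam k)| :=
      Finset.measurable_prod _ fun k _ =>
        ((hSm k i).comp (measurable_pi_apply k)).abs
    have hfm : Measurable fun lam : ∀ k, Λ k =>
        (∏ k : Fin N, S k i (lam k)) * B i lam :=
      (Finset.measurable_prod _ fun k _ => (hSm k i).comp (measurable_pi_apply k)).mul (hBm i)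
    have hgb : ∀ lam : ∀ k, Λ k,
        (∏ k : Fin N, |S k i (lam k)|) ≤ ∏ k : Fin N, ∑ x : Fin (nA k), |M k i x| :=
      fun lam => Finset.prod_le_prod (fun k _ => abs_nonneg _) (fun k _ => hSb k i (lam k))
    have hgb' : ∀ lam : ∀ k, Λ k,
        abs (∏ k : Fin N, |S k i (lam k)|) ≤ ∏ k : Fin N, ∑ x : Fin (nA k), |M k i x| := by
      intro lam
      rw [abs_of_nonneg (Finset.prod_nonneg fun k _ => abs_nonneg _)]
      exact hgb lam
    have hle : ∀ lam : ∀ k, Λ k,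
        |(∏ k : Fin N, S k i (lam k)) * B i lam| ≤ ∏ k : Fin N, |S k i (lam k)| := by
      intro lam
      rw [abs_mul, Finset.abs_prod]
      exact mul_le_of_le_one_right (Finset.prod_nonneg fun k _ => abs_nonneg _) (hBb i lam)
    have hfInt : Integrable (fun lam : ∀ k, Λ k =>
        (∏ k : Fin N, S k i (lam k)) * B i lam) (Measure.pi q) :=
      integrable_of_bdd hfm (fun lam => le_trans (hle lam) (hgb lam))
    have hgInt : Integrable (fun lam : ∀ k, Λ k =>
        ∏ k : Fin N, |S k i (lam k)|) (Measure.pi q) :=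
      integrable_of_bdd hgm hgb'
    calc |∫ lam, (∏ k : Fin N, S k i (lam k)) * B i lam ∂(Measure.pi q)|
        ≤ ∫ lam, |(∏ k : Fin N, S k i (lam k)) * B i lam| ∂(Measure.pi q) := by
          simpa only [Real.norm_eq_abs] using norm_integral_le_integral_norm
            (fun lam : ∀ k, Λ k => (∏ k : Fin N, S k i (lam k)) * B i lam) (μ := Measure.pi q)
      _ ≤ ∫ lam, ∏ k : Fin N, |S k i (lam k)| ∂(Measure.pi q) :=
          integral_mono hfInt.abs hgInt hle
      _ = ∏ k : Fin N, a i k :=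
          MeasureTheory.integral_fintype_prod_eq_prod
            (fun k (l : Λ k) => |S k i l|)
  -- combine
  calc ∑ i : Fin nB, |I i| ^ (1/(N:ℝ))
      ≤ ∑ i : Fin nB, ∏ k : Fin N, a i k ^ (1/(N:ℝ)) := by
        refine Finset.sum_le_sum fun i _ => ?_
        rw [Real.finset_prod_rpow _ _ (fun k _ => ha0 i k)]
        exact Real.rpow_le_rpow (abs_nonneg _) (hkey i) hrpos.le
    _ ≤ ∏ k : Fin N, (∑ i : Fin nB, a i k) ^ (1/(N:ℝ)) := geom_superadd hN a ha0
    _ ≤ ∏ k : Fin N, C k ^ (1/(N:ℝ)) :=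
        Finset.prod_le_prod (fun k _ => Real.rpow_nonneg
            (Finset.sum_nonneg fun i _ => ha0 i k) _)
          (fun k _ => Real.rpow_le_rpow
            (Finset.sum_nonneg fun i _ => ha0 i k) (hcol k) hrpos.le)
    _ = (∏ k : Fin N, C k) ^ (1/(N:ℝ)) :=
        Real.finset_prod_rpow _ _ (fun k _ => hC0 k) _
end

section
/- For the CHSH matrix M_{xy} = (1/2)(−1)^{xy} on {0,1}² (with local bound 1), every N-local strategy satisfies |I_1|^{1/N} + |I_2|^{1/N} ≤ 1, where I_1 = ∫ ∏_k (A^k_0(λ_k)+A^k_1(λ_k))/2 · B_1(λ⃗) dq and I_2 = ∫ ∏_k (A^k_0(λ_k)−A^k_1(λ_k))/2 · B_2(λ⃗) dq. -/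
open MeasureTheory

theorem stmt_11 (N : ℕ) (hN : 1 ≤ N)
    (Λ : Fin N → Type) [∀ k, MeasurableSpace (Λ k)]
    (q : ∀ k, Measure (Λ k)) [∀ k, IsProbabilityMeasure (q k)]
    (A : ∀ k : Fin N, Fin 2 → Λ k → ℝ)
    (B : Fin 2 → (∀ k, Λ k) → ℝ)
    (hAm : ∀ k x, Measurable (A k x))
    (hBm : ∀ i, Measurable (B i))
    (hAb : ∀ k x lam, |A k x lam| ≤ 1)
    (hBb : ∀ i lam, |B i lam| ≤ 1)
    (I₁ I₂ : ℝ)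
    (hI₁ : I₁ = ∫ lam, (∏ k : Fin N, (A k 0 (lam k) + A k 1 (lam k)) / 2) *
        B 0 lam ∂(Measure.pi q))
    (hI₂ : I₂ = ∫ lam, (∏ k : Fin N, (A k 0 (lam k) - A k 1 (lam k)) / 2) *
        B 1 lam ∂(Measure.pi q)) :
    |I₁| ^ (1 / (N : ℝ)) + |I₂| ^ (1 / (N : ℝ)) ≤ 1 := by
  letI : ∀ k, MeasureSpace (Λ k) := fun k => ⟨q k⟩
  have hvol : ∀ k, (volume : Measure (Λ k)) = q k := fun k => rfl
  haveI : ∀ k, IsProbabilityMeasure (volume : Measure (Λ k)) := fun k => by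
    rw [hvol]; infer_instance
  haveI : ∀ k, SigmaFinite (volume : Measure (Λ k)) := fun k => inferInstance
  set f : ∀ k : Fin N, Λ k → ℝ := fun k l => |A k 0 l + A k 1 l| / 2 with hf
  set g : ∀ k : Fin N, Λ k → ℝ := fun k l => |A k 0 l - A k 1 l| / 2 with hg
  have hfnn : ∀ k l, 0 ≤ f k l := fun k l => by positivity
  have hgnn : ∀ k l, 0 ≤ g k l := fun k l => by positivity
  have hfb : ∀ k l, f k l ≤ 1 := fun k l => by
    have h0 := abs_le.1 (hAb k 0 l); have h1 := abs_le.1 (hAb k 1 l)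
    have h2 : |A k 0 l + A k 1 l| ≤ 2 := abs_le.2 ⟨by linarith, by linarith⟩
    simp only [hf]; linarith
  have hgb : ∀ k l, g k l ≤ 1 := fun k l => by
    have h0 := abs_le.1 (hAb k 0 l); have h1 := abs_le.1 (hAb k 1 l)
    have h2 : |A k 0 l - A k 1 l| ≤ 2 := abs_le.2 ⟨by linarith, by linarith⟩
    simp only [hg]; linarith
  have hfgsum : ∀ k l, f k l + g k l ≤ 1 := fun k l => by
    have h0 := abs_le.1 (hAb k 0 l); have h1 := abs_le.1 (hAb k 1 l)
    rcases abs_cases (A k 0 l + A k 1 l) with ⟨hp, _⟩ | ⟨hp, _⟩ <;>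
    rcases abs_cases (A k 0 l - A k 1 l) with ⟨hm, _⟩ | ⟨hm, _⟩ <;>
      simp only [hf, hg] <;> rw [hp, hm] <;> linarith
  have hfm : ∀ k, Measurable (f k) := fun k =>
    (((hAm k 0).add (hAm k 1)).abs).div_const 2
  have hgm : ∀ k, Measurable (g k) := fun k =>
    (((hAm k 0).sub (hAm k 1)).abs).div_const 2
  -- integrability of bounded measurable functions
  have hint : ∀ (α : Type) [MeasurableSpace α] (μ : Measure α) [IsProbabilityMeasure μ]
      (h : α → ℝ), Measurable h → (∀ a, |h a| ≤ 1) → Integrable h μ := by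
    intro α _ μ _ h hm hb
    exact ⟨hm.aestronglyMeasurable,
      HasFiniteIntegral.of_bounded (C := 1) (ae_of_all μ fun a => by
        simpa using hb a)⟩
  have hfint : ∀ k, Integrable (f k) (q k) := fun k =>
    hint _ _ (f k) (hfm k) (fun l => by rw [abs_of_nonneg (hfnn k l)]; exact hfb k l)
  have hgint : ∀ k, Integrable (g k) (q k) := fun k =>
    hint _ _ (g k) (hgm k) (fun l => by rw [abs_of_nonneg (hgnn k l)]; exact hgb k l)
  set α : Fin N → ℝ := fun k => ∫ l, f k l ∂(q k) with hα
  set β : Fin N → ℝ := fun k => ∫ l, g k l ∂(q k) with hβ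
  have hαnn : ∀ k, 0 ≤ α k := fun k => integral_nonneg (hfnn k)
  have hβnn : ∀ k, 0 ≤ β k := fun k => integral_nonneg (hgnn k)
  have hαβ : ∀ k, α k + β k ≤ 1 := fun k => by
    rw [hα, hβ]
    calc (∫ l, f k l ∂(q k)) + ∫ l, g k l ∂(q k)
        = ∫ l, (f k l + g k l) ∂(q k) := (integral_add (hfint k) (hgint k)).symm
      _ ≤ ∫ (_ : Λ k), (1 : ℝ) ∂(q k) := integral_mono ((hfint k).add (hgint k))
          (integrable_const 1) (hfgsum k)
      _ = 1 := by simp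
  haveI : IsProbabilityMeasure (Measure.pi q) := by infer_instance
  -- bound |I₁| ≤ ∏ α, |I₂| ≤ ∏ β
  have key : ∀ (h : ∀ k, Λ k → ℝ) (i : Fin 2) (J : ℝ),
      (∀ k, Measurable (h k)) → (∀ k l, |h k l| ≤ 1) →
      J = ∫ lam, (∏ k : Fin N, h k (lam k)) * B i lam ∂(Measure.pi q) →
      |J| ≤ ∏ k, ∫ l, |h k l| ∂(q k) := by
    intro h i J hm hb hJ
    have hFm : Measurable fun lam : ∀ k, Λ k => (∏ k : Fin N, h k (lam k)) * B i lam := by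
      exact (Finset.measurable_prod _ fun k _ => (hm k).comp (measurable_pi_apply k)).mul (hBm i)
    have hFb : ∀ lam, |(∏ k : Fin N, h k (lam k)) * B i lam| ≤ 1 := fun lam => by
      rw [abs_mul]
      have h1 : |∏ k : Fin N, h k (lam k)| ≤ 1 := by
        rw [Finset.abs_prod]
        exact Finset.prod_le_one (fun k _ => abs_nonneg _) (fun k _ => hb k (lam k))
      calc |∏ k : Fin N, h k (lam k)| * |B i lam| ≤ 1 * 1 :=
            mul_le_mul h1 (hBb i lam) (abs_nonneg _) zero_le_one
        _ = 1 := by ring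
    have hFint : Integrable (fun lam => (∏ k : Fin N, h k (lam k)) * B i lam)
        (Measure.pi q) := hint _ _ _ hFm hFb
    have hPint : Integrable (fun lam : ∀ k, Λ k => ∏ k : Fin N, |h k (lam k)|)
        (Measure.pi q) := by
      exact Integrable.fintype_prod_dep (𝕜 := ℝ) (f := fun k l => |h k l|)
        (fun k => hint _ _ _ (hm k).abs (fun l => by rw [abs_abs]; exact hb k l))
    calc |J| ≤ ∫ lam, |(∏ k : Fin N, h k (lam k)) * B i lam| ∂(Measure.pi q) := by
          rw [hJ]
          simpa only [Real.norm_eq_abs] using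
            norm_integral_le_integral_norm
              (fun lam => (∏ k : Fin N, h k (lam k)) * B i lam) (μ := Measure.pi q)
      _ ≤ ∫ lam, ∏ k : Fin N, |h k (lam k)| ∂(Measure.pi q) := by
          apply integral_mono hFint.abs hPint
          intro lam
          dsimp only
          rw [abs_mul, Finset.abs_prod]
          calc (∏ k : Fin N, |h k (lam k)|) * |B i lam|
              ≤ (∏ k : Fin N, |h k (lam k)|) * 1 :=
                mul_le_mul_of_nonneg_left (hBb i lam)
                  (Finset.prod_nonneg fun k _ => abs_nonneg _)
            _ = ∏ k : Fin N, |h k (lam k)| := mul_one _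
      _ = ∏ k, ∫ l, |h k l| ∂(q k) := by
          have : (Measure.pi q) = (volume : Measure (∀ k, Λ k)) := rfl
          rw [this]
          exact integral_fintype_prod_eq_prod (fun k l => |h k l|) (μ := q)
  have hI1 : |I₁| ≤ ∏ k, α k := by
    have h1 := key (fun k l => (A k 0 l + A k 1 l) / 2) 0 I₁
      (fun k => ((hAm k 0).add (hAm k 1)).div_const 2)
      (fun k l => by rw [abs_div, abs_two]; exact hfb k l) hI₁
    refine h1.trans (le_of_eq (Finset.prod_congr rfl fun k _ => ?_))
    rw [hα]; congr 1; funext l; rw [hf, abs_div, abs_two]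
  have hI2 : |I₂| ≤ ∏ k, β k := by
    have h1 := key (fun k l => (A k 0 l - A k 1 l) / 2) 1 I₂
      (fun k => ((hAm k 0).sub (hAm k 1)).div_const 2)
      (fun k l => by rw [abs_div, abs_two]; exact hgb k l) hI₂
    refine h1.trans (le_of_eq (Finset.prod_congr rfl fun k _ => ?_))
    rw [hβ]; congr 1; funext l; rw [hg, abs_div, abs_two]
  -- AM-GM
  have hNpos : (0 : ℝ) < N := by exact_mod_cast hN
  have hwsum : ∑ _k : Fin N, (1 / (N : ℝ)) = 1 := by
    rw [Finset.sum_const, Finset.card_univ, Fintype.card_fin, nsmul_eq_mul]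
    field_simp
  have amgm : ∀ z : Fin N → ℝ, (∀ k, 0 ≤ z k) →
      (∏ k, z k) ^ (1 / (N : ℝ)) ≤ ∑ k, (1 / (N : ℝ)) * z k := by
    intro z hz
    rw [← Real.finset_prod_rpow _ _ (fun k _ => hz k)]
    exact Real.geom_mean_le_arith_mean_weighted _ _ _
      (fun k _ => by positivity) hwsum (fun k _ => hz k)
  have hm1 : |I₁| ^ (1 / (N : ℝ)) ≤ (∏ k, α k) ^ (1 / (N : ℝ)) :=
    Real.rpow_le_rpow (abs_nonneg _) hI1 (by positivity)
  have hm2 : |I₂| ^ (1 / (N : ℝ)) ≤ (∏ k, β k) ^ (1 / (N : ℝ)) :=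
    Real.rpow_le_rpow (abs_nonneg _) hI2 (by positivity)
  calc |I₁| ^ (1 / (N : ℝ)) + |I₂| ^ (1 / (N : ℝ))
      ≤ (∏ k, α k) ^ (1 / (N : ℝ)) + (∏ k, β k) ^ (1 / (N : ℝ)) := add_le_add hm1 hm2
    _ ≤ (∑ k, (1 / (N : ℝ)) * α k) + ∑ k, (1 / (N : ℝ)) * β k :=
        add_le_add (amgm α hαnn) (amgm β hβnn)
    _ = ∑ k, (1 / (N : ℝ)) * (α k + β k) := by
        rw [← Finset.sum_add_distrib]; congr 1; funext k; ring
    _ ≤ ∑ _k : Fin N, (1 / (N : ℝ)) := by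
        apply Finset.sum_le_sum
        intro k _
        exact (mul_le_mul_of_nonneg_left (hαβ k) (by positivity)).trans_eq (mul_one _)
    _ = 1 := hwsum
end
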